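/- arXiv:1605.05457 — 3 statements merged into one kernel-verified Lean document; each statement's English description precedes it below -/
import Mathlib

section
/- Let I ⊂ ℝ be an open interval and f : I → ℝ a C^j function (j ≥ 1) such that |f^{(j)}(x)| ≥ δ for all x ∈ I, where δ > 0. Then there is a constant C depending only on j such that for every ε > 0 the Lebesgue measure of the set {x ∈ I : |f(x)| < ε} is at most C·(ε/δ)^{1/j}. -/
open MeasureTheory Set

private lemma kam_iterDW_open (n : ℕ) (f : ℝ → ℝ) {s : Set ℝ} (hs : IsOpen s) {x : ℝ}
    (hx : x ∈ s) : iteratedDerivWithin n f s x = iteratedDeriv n f x := by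
  rw [iteratedDerivWithin_eq_iteratedFDerivWithin, iteratedDeriv_eq_iteratedFDeriv,
    iteratedFDerivWithin_of_isOpen n hs hx]

/-- If `|g'| ≥ δ` on `(a,b)` then the sublevel set `{|g| < ε}` is contained in an
interval of length at most `4ε/δ`. -/
private lemma kam_subset (a b : ℝ) (g g' : ℝ → ℝ) (δ ε : ℝ) (hδ : 0 < δ) (hε : 0 ≤ ε)
    (hdiff : ∀ x ∈ Ioo a b, HasDerivAt g (g' x) x)
    (hbig : ∀ x ∈ Ioo a b, δ ≤ |g' x|) :
    ∃ u v : ℝ, v - u ≤ 4 * ε / δ ∧ {x ∈ Ioo a b | |g x| < ε} ⊆ Icc u v := by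
  set S := {x ∈ Ioo a b | |g x| < ε} with hS
  have key : ∀ x ∈ S, ∀ y ∈ S, x < y → y - x ≤ 2 * ε / δ := by
    rintro x ⟨hx, hgx⟩ y ⟨hy, hgy⟩ hxy
    have hsub : Icc x y ⊆ Ioo a b := Icc_subset_Ioo hx.1 hy.2
    have hsub' : Ioo x y ⊆ Ioo a b := fun c hc => hsub (Ioo_subset_Icc_self hc)
    have hcont : ContinuousOn g (Icc x y) := fun c hc =>
      ((hdiff c (hsub hc)).continuousAt).continuousWithinAt
    obtain ⟨c, hc, hceq⟩ := exists_hasDerivAt_eq_slope g g' hxy hcont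
      (fun c hc => hdiff c (hsub' hc))
    have h1 : δ ≤ |g y - g x| / (y - x) := by
      have := hbig c (hsub' hc)
      rwa [hceq, abs_div, abs_of_pos (sub_pos.2 hxy)] at this
    have h2 : δ * (y - x) ≤ |g y - g x| := by
      rw [le_div_iff₀ (sub_pos.2 hxy)] at h1
      linarith
    have h3 : |g y - g x| < 2 * ε := by
      calc |g y - g x| ≤ |g y| + |g x| := abs_sub _ _
        _ < 2 * ε := by linarith
    rw [le_div_iff₀ hδ]
    nlinarith
  rcases S.eq_empty_or_nonempty with hemp | ⟨x₀, hx₀⟩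
  · exact ⟨0, 0, by simpa using div_nonneg (by linarith) hδ.le,
      by rw [hemp]; exact empty_subset _⟩
  · have hd : 0 ≤ 2 * ε / δ := div_nonneg (by linarith) hδ.le
    refine ⟨x₀ - 2 * ε / δ, x₀ + 2 * ε / δ,
      by rw [show x₀ + 2 * ε / δ - (x₀ - 2 * ε / δ) = 4 * ε / δ by ring], ?_⟩
    intro y hy
    rcases lt_trichotomy y x₀ with h | h | h
    · have := key y hy x₀ hx₀ h
      constructor <;> linarith
    · subst h
      constructor <;> linarith
    · have := key x₀ hx₀ y hy h
      constructor <;> linarith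

/-- Measure estimate for functions with a large `j`-th derivative:
if `|f^{(j)}| ≥ δ` on an open interval, then `{|f| < ε}` has measure
at most `C (ε/δ)^{1/j}` with `C = C(j)`. -/
theorem measure_small_values_of_iteratedDeriv_lower_bound
    (j : ℕ) (hj : 1 ≤ j) :
    ∃ C > 0, ∀ (a b : ℝ) (f : ℝ → ℝ) (δ : ℝ), 0 < δ →
      ContDiffOn ℝ j f (Ioo a b) →
      (∀ x ∈ Ioo a b, δ ≤ |iteratedDerivWithin j f (Ioo a b) x|) →
      ∀ ε > 0,
        volume {x ∈ Ioo a b | |f x| < ε} ≤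
          ENNReal.ofReal (C * (ε / δ) ^ ((1 : ℝ) / j)) := by
  induction j, hj using Nat.le_induction with
  | base =>
    refine ⟨4, by norm_num, ?_⟩
    intro a b f δ hδ hf hlow ε hε
    have hder : ∀ x ∈ Ioo a b, HasDerivAt f (deriv f x) x := by
      intro x hx
      exact ((hf.differentiableOn (by norm_num) x hx).differentiableAt
        (isOpen_Ioo.mem_nhds hx)).hasDerivAt
    have hbig : ∀ x ∈ Ioo a b, δ ≤ |deriv f x| := by
      intro x hx
      have := hlow x hx
      rwa [iteratedDerivWithin_one,
        derivWithin_of_isOpen isOpen_Ioo hx] at this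
    obtain ⟨u, v, huv, hsub⟩ := kam_subset a b f (deriv f) δ ε hδ hε.le hder hbig
    calc volume {x ∈ Ioo a b | |f x| < ε} ≤ volume (Icc u v) := measure_mono hsub
      _ = ENNReal.ofReal (v - u) := Real.volume_Icc
      _ ≤ ENNReal.ofReal (4 * (ε / δ) ^ ((1:ℝ) / (1:ℕ))) := by
          apply ENNReal.ofReal_le_ofReal
          rw [Nat.cast_one, div_one, Real.rpow_one, mul_div_assoc] at *
          exact huv
  | succ j hj IH =>
    obtain ⟨C, hC, hP⟩ := IH
    refine ⟨4 + 2 * C, by positivity, ?_⟩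
    intro a b f δ hδ hf hlow ε hε
    set s := Ioo a b with hs
    have hjR : (j:ℝ) ≠ 0 := Nat.cast_ne_zero.2 (by omega)
    have hj1R : (j:ℝ) + 1 ≠ 0 := by positivity
    have hx : (0:ℝ) < ε / δ := div_pos hε hδ
    set t : ℝ := (ε / δ) ^ ((1:ℝ) / ((j:ℝ) + 1)) with ht
    have ht0 : 0 < t := Real.rpow_pos_of_pos hx _
    set η : ℝ := δ * t with hη
    have hη0 : 0 < η := mul_pos hδ ht0
    have hu : UniqueDiffOn ℝ s := isOpen_Ioo.uniqueDiffOn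
    set h : ℝ → ℝ := iteratedDerivWithin j f s with hh
    -- h is differentiable with derivative the (j+1)-st derivative of f
    have hdiffh : DifferentiableOn ℝ h s :=
      hf.differentiableOn_iteratedDerivWithin (by exact_mod_cast j.lt_succ_self) hu
    have hderh : ∀ x ∈ s, HasDerivAt h (iteratedDerivWithin (j+1) f s x) x := by
      intro x hxs
      have hda := ((hdiffh x hxs).differentiableAt (isOpen_Ioo.mem_nhds hxs)).hasDerivAt
      rw [iteratedDerivWithin_succ, derivWithin_of_isOpen isOpen_Ioo hxs]
      exact hda
    obtain ⟨u, v, huv, hBsub⟩ := kam_subset a b h (iteratedDerivWithin (j+1) f s) δ η hδ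
      hη0.le hderh hlow
    set u' : ℝ := min u b with hu'
    set v' : ℝ := max v a with hv'
    -- key exponent computations
    have e1 : ε / η = (ε / δ) ^ (1 - (1:ℝ) / ((j:ℝ) + 1)) := by
      rw [Real.rpow_sub hx, Real.rpow_one, ← ht]
      rw [hη]
      field_simp
    have e2 : (1:ℝ) - 1 / ((j:ℝ) + 1) = (j:ℝ) / ((j:ℝ) + 1) := by field_simp; ring
    have e3 : (ε / η) ^ ((1:ℝ) / (j:ℝ)) = t := by
      rw [e1, e2, ← Real.rpow_mul hx.le, ht]
      congr 1
      field_simp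
    have e4 : 4 * η / δ = 4 * t := by
      rw [hη]; field_simp
    -- bounds for the two side intervals
    have tail_bound : ∀ a' b' : ℝ, Ioo a' b' ⊆ s → (∀ y ∈ Ioo a' b', ¬ |h y| < η) →
        volume {x ∈ Ioo a' b' | |f x| < ε} ≤ ENNReal.ofReal (C * t) := by
      intro a' b' hsub hnot
      have hcd : ContDiffOn ℝ j f (Ioo a' b') :=
        (hf.of_le (by exact_mod_cast j.le_succ)).mono hsub
      have hlow' : ∀ y ∈ Ioo a' b', η ≤ |iteratedDerivWithin j f (Ioo a' b') y| := by
        intro y hy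
        have hys : y ∈ s := hsub hy
        have : η ≤ |h y| := not_lt.1 (hnot y hy)
        rwa [kam_iterDW_open j f isOpen_Ioo hy, ← kam_iterDW_open j f isOpen_Ioo hys]
      have := hP a' b' f η hη0 hcd hlow' ε hε
      rwa [e3] at this
    have hT1 : volume {x ∈ Ioo a u' | |f x| < ε} ≤ ENNReal.ofReal (C * t) := by
      apply tail_bound
      · exact fun y hy => ⟨hy.1, lt_of_lt_of_le hy.2 (min_le_right u b)⟩
      · intro y hy hc
        have hys : y ∈ s := ⟨hy.1, lt_of_lt_of_le hy.2 (min_le_right u b)⟩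
        have hyu : y < u := lt_of_lt_of_le hy.2 (min_le_left u b)
        exact absurd (hBsub ⟨hys, hc⟩).1 (not_le.2 hyu)
    have hT2 : volume {x ∈ Ioo v' b | |f x| < ε} ≤ ENNReal.ofReal (C * t) := by
      apply tail_bound
      · exact fun y hy => ⟨lt_of_le_of_lt (le_max_right v a) hy.1, hy.2⟩
      · intro y hy hc
        have hys : y ∈ s := ⟨lt_of_le_of_lt (le_max_right v a) hy.1, hy.2⟩
        have hyv : v < y := lt_of_le_of_lt (le_max_left v a) hy.1
        exact absurd (hBsub ⟨hys, hc⟩).2 (not_le.2 hyv)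
    -- covering
    have hcover : {x ∈ s | |f x| < ε} ⊆
        Icc u v ∪ ({x ∈ Ioo a u' | |f x| < ε} ∪ {x ∈ Ioo v' b | |f x| < ε}) := by
      rintro y ⟨hy, hfy⟩
      by_cases hyuv : y ∈ Icc u v
      · exact Or.inl hyuv
      · rw [mem_Icc, not_and_or, not_le, not_le] at hyuv
        rcases hyuv with hlt | hgt
        · exact Or.inr (Or.inl ⟨⟨hy.1, lt_min hlt hy.2⟩, hfy⟩)
        · exact Or.inr (Or.inr ⟨⟨max_lt hgt hy.1, hy.2⟩, hfy⟩)
    have hcast : ((j + 1 : ℕ) : ℝ) = (j:ℝ) + 1 := by push_cast; ring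
    calc volume {x ∈ s | |f x| < ε}
        ≤ volume (Icc u v ∪ ({x ∈ Ioo a u' | |f x| < ε} ∪ {x ∈ Ioo v' b | |f x| < ε})) :=
          measure_mono hcover
      _ ≤ volume (Icc u v) +
          volume ({x ∈ Ioo a u' | |f x| < ε} ∪ {x ∈ Ioo v' b | |f x| < ε}) :=
          measure_union_le _ _
      _ ≤ volume (Icc u v) +
          (volume {x ∈ Ioo a u' | |f x| < ε} + volume {x ∈ Ioo v' b | |f x| < ε}) := by
          gcongr
          exact measure_union_le _ _
      _ ≤ ENNReal.ofReal (4 * t) + (ENNReal.ofReal (C * t) + ENNReal.ofReal (C * t)) :=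
          add_le_add
            (by rw [Real.volume_Icc]; exact ENNReal.ofReal_le_ofReal (by linarith [e4]))
            (add_le_add hT1 hT2)
      _ ≤ ENNReal.ofReal ((4 + 2 * C) * (ε / δ) ^ ((1:ℝ) / ((j + 1 : ℕ) : ℝ))) := by
          rw [hcast, ← ht, ← ENNReal.ofReal_add (by positivity) (by positivity),
            ← ENNReal.ofReal_add (by positivity) (by positivity)]
          exact ENNReal.ofReal_le_ofReal (by ring_nf; nlinarith [ht0.le, hC.le])
end

section
/- Let A(t) = diag(a₁(t),…,a_N(t)) be a real diagonal N×N matrix and B(t) a Hermitian N×N matrix, both C¹ on an interval I ⊂ ℝ. Assume a'_j(t) ≥ 1 for all j and all t ∈ I, and ‖B'(t)‖ ≤ 1/2 for all t ∈ I. Then for every ε > 0, the operator norm ‖(A(t)+B(t))^{-1}‖ ≤ 1/ε holds for all t ∈ I outside a set of Lebesgue measure at most C·N·ε, where C is an absolute constant. -/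
open MeasureTheory Set
open scoped Matrix.Norms.L2Operator

variable {N : ℕ} (M : Matrix (Fin N) (Fin N) ℂ) (hM : M.IsHermitian)

noncomputable def qf (M : Matrix (Fin N) (Fin N) ℂ) (v : EuclideanSpace ℂ (Fin N)) : ℝ :=
  Complex.re (inner ℂ v (Matrix.toEuclideanCLM (𝕜 := ℂ) M v))

lemma K0 (j : Fin N) :
    Matrix.toEuclideanCLM (𝕜 := ℂ) M (hM.eigenvectorBasis j) =
      (hM.eigenvalues j : ℂ) • hM.eigenvectorBasis j := by
  apply (WithLp.equiv 2 _).injective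
  simp [Matrix.ofLp_toEuclideanCLM, Matrix.toLin'_apply, hM.mulVec_eigenvectorBasis j]

lemma K1 (v : EuclideanSpace ℂ (Fin N)) (i : Fin N) :
    hM.eigenvectorBasis.repr (Matrix.toEuclideanCLM (𝕜 := ℂ) M v) i
      = (hM.eigenvalues i : ℂ) * hM.eigenvectorBasis.repr v i := by
  conv_lhs => rw [← hM.eigenvectorBasis.sum_repr v]
  rw [map_sum, map_sum]
  simp_rw [_root_.map_smul, K0, _root_.map_smul, hM.eigenvectorBasis.repr_self]
  have : ∀ (f : Fin N → EuclideanSpace ℂ (Fin N)), (∑ x, f x) i = ∑ x, f x i := by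
    intro f
    induction (Finset.univ : Finset (Fin N)) using Finset.induction with
    | empty => rfl
    | insert _ _ h ih => simp [Finset.sum_insert h, ih]
  rw [this]
  simp [EuclideanSpace.single_apply, smul_eq_mul, Finset.sum_ite_eq', mul_comm, mul_assoc, mul_left_comm]

lemma nsq (v : EuclideanSpace ℂ (Fin N)) : ‖v‖ ^ 2 = ∑ i, ‖v i‖ ^ 2 := by
  rw [EuclideanSpace.norm_eq, Real.sq_sqrt]
  positivity

lemma K2 (v : EuclideanSpace ℂ (Fin N)) :
    ‖v‖ ^ 2 = ∑ i, ‖hM.eigenvectorBasis.repr v i‖ ^ 2 := by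
  rw [← hM.eigenvectorBasis.repr.norm_map v, nsq]

lemma K3 (v : EuclideanSpace ℂ (Fin N)) :
    qf M v = ∑ i, hM.eigenvalues i * ‖hM.eigenvectorBasis.repr v i‖ ^ 2 := by
  rw [qf, ← hM.eigenvectorBasis.repr.inner_map_map v (Matrix.toEuclideanCLM (𝕜 := ℂ) M v)]
  rw [PiLp.inner_apply]
  simp_rw [K1, RCLike.inner_apply]
  rw [Complex.re_sum]
  congr 1; funext i
  have h1 : (starRingEnd ℂ) (hM.eigenvectorBasis.repr v i) *
      ((hM.eigenvalues i : ℂ) * hM.eigenvectorBasis.repr v i)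
      = ((hM.eigenvalues i * ‖hM.eigenvectorBasis.repr v i‖ ^ 2 : ℝ) : ℂ) := by
    rw [mul_left_comm, RCLike.conj_mul]
    rw [Complex.ofReal_mul, Complex.ofReal_pow]; rfl
  rw [mul_comm, h1, Complex.ofReal_re]

lemma K4 (v : EuclideanSpace ℂ (Fin N)) :
    ‖Matrix.toEuclideanCLM (𝕜 := ℂ) M v‖ ^ 2
      = ∑ i, hM.eigenvalues i ^ 2 * ‖hM.eigenvectorBasis.repr v i‖ ^ 2 := by
  rw [K2 M hM]
  congr 1; funext i
  rw [K1, norm_mul, mul_pow, Complex.norm_real, Real.norm_eq_abs, sq_abs]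

noncomputable def cnt (s : ℝ) : ℕ :=
  (Finset.univ.filter fun i => hM.eigenvalues i < s).card

lemma cnt_mono {s₁ s₂ : ℝ} (h : s₁ ≤ s₂) : cnt M hM s₁ ≤ cnt M hM s₂ := by
  apply Finset.card_le_card
  intro i hi
  simp only [Finset.mem_filter, Finset.mem_univ, true_and] at hi ⊢
  linarith

lemma cnt_le (s : ℝ) : cnt M hM s ≤ N := by
  simpa [cnt] using (Finset.card_filter_le Finset.univ fun i => hM.eigenvalues i < s)

lemma finrank_le_cnt (s : ℝ) (W : Submodule ℂ (EuclideanSpace ℂ (Fin N)))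
    (hW : ∀ v ∈ W, v ≠ 0 → qf M v < s * ‖v‖ ^ 2) :
    Module.finrank ℂ W ≤ cnt M hM s := by
  classical
  set T := (Finset.univ.filter fun i => hM.eigenvalues i < s) with hT
  let L : W →ₗ[ℂ] ({ i // i ∈ T } → ℂ) :=
    { toFun := fun w i => hM.eigenvectorBasis.repr w.1 i.1
      map_add' := by intro x y; funext i; simp
      map_smul' := by intro c x; funext i; simp }
  have hinj : Function.Injective L := by
    rw [← LinearMap.ker_eq_bot, Submodule.eq_bot_iff]
    rintro ⟨v, hv⟩ hLv
    have hcoord : ∀ i, i ∈ T → hM.eigenvectorBasis.repr v i = 0 := by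
      intro i hi
      exact congrFun hLv ⟨i, hi⟩
    ext
    by_contra hv0
    have hne : v ≠ 0 := fun h => hv0 (by simp [h])
    have h1 : qf M v < s * ‖v‖ ^ 2 := hW v hv hne
    have h2 : s * ‖v‖ ^ 2 ≤ qf M v := by
      rw [K3 M hM, K2 M hM, Finset.mul_sum]
      apply Finset.sum_le_sum
      intro i _
      by_cases hi : i ∈ T
      · simp [hcoord i hi]
      · have : s ≤ hM.eigenvalues i := by
          simp only [hT, Finset.mem_filter, Finset.mem_univ, true_and, not_lt] at hi
          exact hi
        exact mul_le_mul_of_nonneg_right this (by positivity)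
    linarith
  calc Module.finrank ℂ W ≤ Module.finrank ℂ ({ i // i ∈ T } → ℂ) :=
        LinearMap.finrank_le_finrank_of_injective hinj
    _ = T.card := by simp [Module.finrank_pi]

lemma qf_add (M₁ M₂ : Matrix (Fin N) (Fin N) ℂ) (v : EuclideanSpace ℂ (Fin N)) :
    qf (M₁ + M₂) v = qf M₁ v + qf M₂ v := by
  simp [qf, map_add, inner_add_right]

lemma cnt_comp {M₁ M₂ : Matrix (Fin N) (Fin N) ℂ} (hM₁ : M₁.IsHermitian) (hM₂ : M₂.IsHermitian)
    {δ : ℝ} (s : ℝ)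
    (h : ∀ v : EuclideanSpace ℂ (Fin N), qf M₁ v + δ * ‖v‖ ^ 2 ≤ qf M₂ v) :
    cnt M₂ hM₂ s ≤ cnt M₁ hM₁ (s - δ) := by
  classical
  set T := (Finset.univ.filter fun i => hM₂.eigenvalues i < s) with hT
  set W : Submodule ℂ (EuclideanSpace ℂ (Fin N)) :=
    Submodule.span ℂ (Set.range (fun i : { i // i ∈ T } => (hM₂.eigenvectorBasis i.1))) with hW
  have hli : LinearIndependent ℂ (fun i : { i // i ∈ T } => (hM₂.eigenvectorBasis i.1)) :=
    hM₂.eigenvectorBasis.orthonormal.linearIndependent.comp _ Subtype.val_injective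
  have hcard : Module.finrank ℂ W = T.card := by
    rw [hW, finrank_span_eq_card hli, Fintype.card_coe]
  -- members of W have coordinates supported in T
  have hsupp : ∀ v ∈ W, ∀ i, i ∉ T → hM₂.eigenvectorBasis.repr v i = 0 := by
    intro v hv
    induction hv using Submodule.span_induction with
    | mem x hx =>
      obtain ⟨j, rfl⟩ := hx
      intro i hi
      rw [hM₂.eigenvectorBasis.repr_self, EuclideanSpace.single_apply]
      have : i ≠ j.1 := fun h => hi (h ▸ j.2)
      simp [this]
    | zero => intro i _; simp
    | add x y _ _ hx hy => intro i hi; simp [map_add, hx i hi, hy i hi]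
    | smul c x _ hx => intro i hi; simp [_root_.map_smul, hx i hi]
  -- quadratic form bound on W for M₂
  have hq2 : ∀ v ∈ W, v ≠ 0 → qf M₂ v < s * ‖v‖ ^ 2 := by
    intro v hv hvne
    rw [K3 M₂ hM₂, K2 M₂ hM₂, Finset.mul_sum]
    obtain ⟨i₀, hi₀⟩ : ∃ i, hM₂.eigenvectorBasis.repr v i ≠ 0 := by
      by_contra hall
      push_neg at hall
      exact hvne (by
        apply hM₂.eigenvectorBasis.repr.injective
        ext i
        simp [hall i])
    have hi₀T : i₀ ∈ T := by
      by_contra hc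
      exact hi₀ (hsupp v hv i₀ hc)
    apply Finset.sum_lt_sum
    · intro i _
      by_cases hi : i ∈ T
      · have : hM₂.eigenvalues i < s := by
          simpa [hT] using hi
        exact mul_le_mul_of_nonneg_right this.le (by positivity)
      · simp [hsupp v hv i hi]
    · refine ⟨i₀, Finset.mem_univ i₀, ?_⟩
      have h1 : hM₂.eigenvalues i₀ < s := by simpa [hT] using hi₀T
      have h2 : (0:ℝ) < ‖hM₂.eigenvectorBasis.repr v i₀‖ ^ 2 := by
        have := norm_pos_iff.mpr hi₀
        positivity
      nlinarith
  have hq1 : ∀ v ∈ W, v ≠ 0 → qf M₁ v < (s - δ) * ‖v‖ ^ 2 := by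
    intro v hv hvne
    have := h v
    have := hq2 v hv hvne
    nlinarith [sq_nonneg ‖v‖]
  calc cnt M₂ hM₂ s = Module.finrank ℂ W := by rw [hcard]; rfl
    _ ≤ cnt M₁ hM₁ (s - δ) := finrank_le_cnt M₁ hM₁ (s - δ) W hq1

lemma good_t {ε : ℝ} (hε : 0 < ε) (h : ∀ i, ε ≤ |hM.eigenvalues i|) :
    IsUnit M ∧ ‖M⁻¹‖ ≤ 1 / ε := by
  have hdet : IsUnit M.det := by
    rw [hM.det_eq_prod_eigenvalues]
    apply isUnit_iff_ne_zero.mpr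
    apply Finset.prod_ne_zero_iff.mpr
    intro i _
    have : hM.eigenvalues i ≠ 0 := by
      intro h0
      have := h i
      rw [h0] at this
      simp at this
      linarith
    exact Complex.ofReal_ne_zero.mpr this
  have hunit : IsUnit M := (Matrix.isUnit_iff_isUnit_det M).mpr hdet
  refine ⟨hunit, ?_⟩
  -- lower bound ε‖w‖ ≤ ‖Mw‖
  have hlow : ∀ w : EuclideanSpace ℂ (Fin N), ε * ‖w‖ ≤ ‖Matrix.toEuclideanCLM (𝕜 := ℂ) M w‖ := by
    intro w
    have h1 : (ε * ‖w‖) ^ 2 ≤ ‖Matrix.toEuclideanCLM (𝕜 := ℂ) M w‖ ^ 2 := by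
      rw [K4 M hM, mul_pow, K2 M hM, Finset.mul_sum]
      apply Finset.sum_le_sum
      intro i _
      have h2 : ε ^ 2 ≤ hM.eigenvalues i ^ 2 := by
        have := h i
        nlinarith [abs_nonneg (hM.eigenvalues i), sq_abs (hM.eigenvalues i)]
      exact mul_le_mul_of_nonneg_right h2 (by positivity)
    have h3 : 0 ≤ ε * ‖w‖ := by positivity
    nlinarith [norm_nonneg (Matrix.toEuclideanCLM (𝕜 := ℂ) M w)]
  rw [Matrix.cstar_norm_def]
  apply ContinuousLinearMap.opNorm_le_bound _ (by positivity)
  intro v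
  set w := Matrix.toEuclideanCLM (𝕜 := ℂ) M⁻¹ v with hw
  have hMw : Matrix.toEuclideanCLM (𝕜 := ℂ) M w = v := by
    have h4 : (Matrix.toEuclideanCLM (𝕜 := ℂ) M) * (Matrix.toEuclideanCLM (𝕜 := ℂ) M⁻¹) = 1 := by
      rw [← map_mul, Matrix.mul_nonsing_inv M hdet, map_one]
    rw [hw, ← ContinuousLinearMap.mul_apply, h4, ContinuousLinearMap.one_apply]
  have hb := hlow w
  rw [hMw] at hb
  calc ‖w‖ = (1 / ε) * (ε * ‖w‖) := by field_simp
    _ ≤ (1 / ε) * ‖v‖ := by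
        apply mul_le_mul_of_nonneg_left hb (by positivity)
    _ = 1 / ε * ‖v‖ := rfl

lemma neg_norm_le_qf (M : Matrix (Fin N) (Fin N) ℂ) (v : EuclideanSpace ℂ (Fin N)) :
    -(‖M‖ * ‖v‖ ^ 2) ≤ qf M v := by
  have h1 : ‖(inner ℂ v (Matrix.toEuclideanCLM (𝕜 := ℂ) M v) : ℂ)‖ ≤ ‖M‖ * ‖v‖ ^ 2 := by
    calc ‖(inner ℂ v (Matrix.toEuclideanCLM (𝕜 := ℂ) M v) : ℂ)‖
        ≤ ‖v‖ * ‖Matrix.toEuclideanCLM (𝕜 := ℂ) M v‖ := norm_inner_le_norm _ _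
      _ ≤ ‖v‖ * (‖Matrix.toEuclideanCLM (𝕜 := ℂ) M‖ * ‖v‖) := by
          apply mul_le_mul_of_nonneg_left (ContinuousLinearMap.le_opNorm _ _) (norm_nonneg _)
      _ = ‖M‖ * ‖v‖ ^ 2 := by rw [← Matrix.cstar_norm_def]; ring
  have h2 := Complex.abs_re_le_norm (inner ℂ v (Matrix.toEuclideanCLM (𝕜 := ℂ) M v))
  have := abs_le.mp (h2.trans h1)
  exact this.1

lemma qf_diag (f : Fin N → ℝ) (v : EuclideanSpace ℂ (Fin N)) :
    qf (Matrix.diagonal fun j => (f j : ℂ)) v = ∑ j, f j * ‖v j‖ ^ 2 := by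
  rw [qf, PiLp.inner_apply]
  rw [Complex.re_sum]
  congr 1; funext j
  have happ : (Matrix.toEuclideanCLM (𝕜 := ℂ) (Matrix.diagonal fun j => (f j : ℂ)) v) j
      = (f j : ℂ) * v j := by
    have := Matrix.ofLp_toEuclideanCLM (𝕜 := ℂ) (Matrix.diagonal fun j => (f j : ℂ)) v
    have h2 := congrFun (congrArg (fun x => (x : Fin N → ℂ)) this) j
    simpa [Matrix.toLin'_apply, Matrix.mulVec_diagonal] using h2
  rw [RCLike.inner_apply, happ]
  have h1 : (starRingEnd ℂ) (v j) * ((f j : ℂ) * v j)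
      = ((f j * ‖v j‖ ^ 2 : ℝ) : ℂ) := by
    rw [mul_left_comm, RCLike.conj_mul]
    rw [Complex.ofReal_mul, Complex.ofReal_pow]; rfl
  rw [mul_comm, h1, Complex.ofReal_re]

lemma isHermitian_diag_real (f : Fin N → ℝ) :
    (Matrix.diagonal fun j => (f j : ℂ)).IsHermitian := by
  rw [Matrix.IsHermitian, Matrix.diagonal_conjTranspose]
  ext j k
  rcases eq_or_ne j k with h | h
  · subst h; simp [Matrix.diagonal_apply_eq, Complex.star_def, Complex.conj_ofReal]
  · simp [Matrix.diagonal_apply_ne _ h]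

/-- Inverse bound for `A(t) + B(t)` with `A` real diagonal with increasing entries
and `B` Hermitian with small derivative: `‖(A(t)+B(t))⁻¹‖ ≤ 1/ε` outside a set of
measure at most `C N ε`, `C` an absolute constant. -/
theorem diagonal_plus_hermitian_inverse_bound :
    ∃ C > 0, ∀ (N : ℕ) (c d : ℝ) (a : Fin N → ℝ → ℝ)
      (B : ℝ → Matrix (Fin N) (Fin N) ℂ),
      (∀ j, ContDiffOn ℝ 1 (a j) (Ioo c d)) →
      (∀ j, ∀ t ∈ Ioo c d, 1 ≤ derivWithin (a j) (Ioo c d) t) →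
      ContDiffOn ℝ 1 B (Ioo c d) →
      (∀ t ∈ Ioo c d, ‖derivWithin B (Ioo c d) t‖ ≤ 1 / 2) →
      (∀ t ∈ Ioo c d, (B t).IsHermitian) →
      ∀ ε > 0, ∃ E : Set ℝ, MeasurableSet E ∧
        volume E ≤ ENNReal.ofReal (C * N * ε) ∧
        ∀ t ∈ Ioo c d \ E,
          IsUnit (Matrix.diagonal (fun j => (a j t : ℂ)) + B t) ∧
          ‖(Matrix.diagonal (fun j => (a j t : ℂ)) + B t)⁻¹‖ ≤ 1 / ε := by
  classical
  refine ⟨16, by norm_num, ?_⟩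
  intro N c d a B ha ha' hB hB' hBh ε hε
  set M : ℝ → Matrix (Fin N) (Fin N) ℂ :=
    fun t => Matrix.diagonal (fun j => (a j t : ℂ)) + B t with hMdef
  have hH : ∀ t ∈ Ioo c d, (M t).IsHermitian :=
    fun t ht => (isHermitian_diag_real fun j => a j t).add (hBh t ht)
  -- mean value estimates
  have hMVTa : ∀ j, ∀ t₁ ∈ Ioo c d, ∀ t₂ ∈ Ioo c d, t₁ ≤ t₂ →
      t₂ - t₁ ≤ a j t₂ - a j t₁ := by
    intro j t₁ h₁ t₂ h₂ h12
    have hmono : MonotoneOn (fun t => a j t - t) (Ioo c d) := by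
      apply monotoneOn_of_deriv_nonneg (convex_Ioo c d)
      · exact ((ha j).continuousOn).sub continuousOn_id
      · rw [interior_Ioo]
        exact ((ha j).differentiableOn one_ne_zero).sub differentiableOn_id
      · intro x hx
        rw [interior_Ioo] at hx
        have hdiff : DifferentiableAt ℝ (a j) x :=
          (((ha j).differentiableOn one_ne_zero) x hx).differentiableAt (isOpen_Ioo.mem_nhds hx)
        have hds : deriv (fun t => a j t - t) x = deriv (a j) x - 1 := by
          rw [deriv_fun_sub hdiff differentiableAt_fun_id]
          simp
        rw [hds]
        have heq : derivWithin (a j) (Ioo c d) x = deriv (a j) x :=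
          derivWithin_of_isOpen isOpen_Ioo hx
        have := ha' j x hx
        rw [heq] at this
        linarith
    have := hmono h₁ h₂ h12
    simp only at this
    linarith
  have hMVTB : ∀ t₁ ∈ Ioo c d, ∀ t₂ ∈ Ioo c d, ‖B t₂ - B t₁‖ ≤ 1 / 2 * |t₂ - t₁| := by
    intro t₁ h₁ t₂ h₂
    have := (convex_Ioo c d).norm_image_sub_le_of_norm_derivWithin_le
      (hB.differentiableOn one_ne_zero) hB' h₁ h₂
    simpa [Real.norm_eq_abs] using this
  -- quadratic form comparison
  have hcomp : ∀ t₁ ∈ Ioo c d, ∀ t₂ ∈ Ioo c d, t₁ ≤ t₂ →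
      ∀ v : EuclideanSpace ℂ (Fin N),
        qf (M t₁) v + (t₂ - t₁) / 2 * ‖v‖ ^ 2 ≤ qf (M t₂) v := by
    intro t₁ h₁ t₂ h₂ h12 v
    have hdecomp : M t₂ = M t₁ +
        ((Matrix.diagonal fun j => ((a j t₂ - a j t₁ : ℝ) : ℂ)) + (B t₂ - B t₁)) := by
      rw [hMdef]
      simp only
      ext i k
      rcases eq_or_ne i k with rfl | hik
      · simp only [Matrix.add_apply, Matrix.sub_apply, Matrix.diagonal_apply_eq]
        push_cast
        ring
      · simp only [Matrix.add_apply, Matrix.sub_apply, Matrix.diagonal_apply_ne _ hik]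
        ring
    have e1 : qf (M t₂) v = qf (M t₁) v +
        (qf (Matrix.diagonal fun j => ((a j t₂ - a j t₁ : ℝ) : ℂ)) v + qf (B t₂ - B t₁) v) := by
      rw [hdecomp, qf_add (M t₁) _ v,
        qf_add (Matrix.diagonal fun j => ((a j t₂ - a j t₁ : ℝ) : ℂ)) (B t₂ - B t₁) v]
    have hA : (t₂ - t₁) * ‖v‖ ^ 2 ≤ qf (Matrix.diagonal fun j => ((a j t₂ - a j t₁ : ℝ) : ℂ)) v := by
      rw [qf_diag (fun j => a j t₂ - a j t₁) v]
      calc (t₂ - t₁) * ‖v‖ ^ 2 = ∑ jj, (t₂ - t₁) * ‖v jj‖ ^ 2 := by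
            rw [← Finset.mul_sum, ← nsq]
        _ ≤ ∑ jj, (a jj t₂ - a jj t₁) * ‖v jj‖ ^ 2 :=
            Finset.sum_le_sum fun jj _ =>
              mul_le_mul_of_nonneg_right (hMVTa jj t₁ h₁ t₂ h₂ h12) (by positivity)
    have hBq : -((t₂ - t₁) / 2 * ‖v‖ ^ 2) ≤ qf (B t₂ - B t₁) v := by
      have h5 := neg_norm_le_qf (B t₂ - B t₁) v
      have h6 : ‖B t₂ - B t₁‖ * ‖v‖ ^ 2 ≤ (t₂ - t₁) / 2 * ‖v‖ ^ 2 := by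
        apply mul_le_mul_of_nonneg_right _ (by positivity)
        have h7 := hMVTB t₁ h₁ t₂ h₂
        rw [abs_of_nonneg (by linarith)] at h7
        linarith
      linarith
    linarith
  clear hMdef
  have hcnt : ∀ t₁, ∀ h₁ : t₁ ∈ Ioo c d, ∀ t₂, ∀ h₂ : t₂ ∈ Ioo c d, t₁ ≤ t₂ → ∀ s : ℝ,
      cnt (M t₂) (hH t₂ h₂) s ≤ cnt (M t₁) (hH t₁ h₁) (s - (t₂ - t₁) / 2) :=
    fun t₁ h₁ t₂ h₂ h12 s => cnt_comp (hH t₁ h₁) (hH t₂ h₂) s (hcomp t₁ h₁ t₂ h₂ h12)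
  -- the counting functions
  set u : ℝ → ℕ := fun t => if h : t ∈ Ioo c d then cnt (M t) (hH t h) ε else 0 with hu
  set w : ℝ → ℕ := fun t => if h : t ∈ Ioo c d then cnt (M t) (hH t h) (-ε) else 0 with hw
  set Bad : Set ℝ := {t | t ∈ Ioo c d ∧ u t ≠ w t} with hBad
  have hue : ∀ t (h : t ∈ Ioo c d), u t = cnt (M t) (hH t h) ε := fun t h => dif_pos h
  have hwe : ∀ t (h : t ∈ Ioo c d), w t = cnt (M t) (hH t h) (-ε) := fun t h => dif_pos h
  have hwu : ∀ t ∈ Ioo c d, w t ≤ u t := by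
    intro t h
    rw [hue t h, hwe t h]
    exact cnt_mono _ _ (by linarith)
  -- key decay step
  have hF3 : ∀ t ∈ Bad, ∀ t' ∈ Ioo c d, t + 4 * ε ≤ t' → u t' < u t := by
    intro t ht t' ht' hle
    obtain ⟨htI, htne⟩ := ht
    have h12 : t ≤ t' := by linarith
    calc u t' = cnt (M t') (hH t' ht') ε := hue t' ht'
      _ ≤ cnt (M t) (hH t htI) (ε - (t' - t) / 2) := hcnt t htI t' ht' h12 ε
      _ ≤ cnt (M t) (hH t htI) (-ε) := cnt_mono _ _ (by linarith)
      _ = w t := (hwe t htI).symm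
      _ < u t := lt_of_le_of_ne (hwu t htI) (Ne.symm htne)
  -- u is ≤ N
  have huN : ∀ t, u t ≤ N := by
    intro t
    by_cases h : t ∈ Ioo c d
    · rw [hue t h]; exact cnt_le _ _ _
    · have h0 : u t = 0 := dif_neg h
      omega
  -- monotonicity of u on I
  have humono : ∀ t₁ ∈ Ioo c d, ∀ t₂ ∈ Ioo c d, t₁ ≤ t₂ → u t₂ ≤ u t₁ := by
    intro t₁ h₁ t₂ h₂ h12
    rw [hue t₁ h₁, hue t₂ h₂]
    calc cnt (M t₂) (hH t₂ h₂) ε ≤ cnt (M t₁) (hH t₁ h₁) (ε - (t₂ - t₁) / 2) :=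
          hcnt t₁ h₁ t₂ h₂ h12 ε
      _ ≤ cnt (M t₁) (hH t₁ h₁) ε := cnt_mono _ _ (by linarith)
  -- the level sets and chosen intervals
  set S : ℕ → Set ℝ := fun k => {t | t ∈ Bad ∧ u t = k} with hS
  set F : ℕ → Set ℝ := fun k =>
    if h : (S k).Nonempty then Icc (h.some - 4 * ε) (h.some + 4 * ε) else ∅ with hF
  set E : Set ℝ := ⋃ k ∈ Finset.range (N + 1), F k with hE
  have hmeas : MeasurableSet E := by
    apply Set.Finite.measurableSet_biUnion (Finset.range (N + 1)).finite_toSet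
    intro k _
    rw [hF]
    by_cases h : (S k).Nonempty
    · simp only [dif_pos h]; exact measurableSet_Icc
    · simp only [dif_neg h]; exact MeasurableSet.empty
  have hFvol : ∀ k, volume (F k) ≤ ENNReal.ofReal (8 * ε) := by
    intro k
    rw [hF]
    by_cases h : (S k).Nonempty
    · simp only [dif_pos h]
      rw [Real.volume_Icc]
      apply ENNReal.ofReal_le_ofReal
      ring_nf
      linarith
    · simp only [dif_neg h, measure_empty]
      positivity
  -- Bad ⊆ E
  have hBadE : Bad ⊆ E := by
    intro t ht
    have htI : t ∈ Ioo c d := ht.1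
    have hkS : t ∈ S (u t) := ⟨ht, rfl⟩
    have hne : (S (u t)).Nonempty := ⟨t, hkS⟩
    set t₀ := hne.some with ht₀
    have ht₀S : t₀ ∈ S (u t) := hne.some_mem
    have ht₀B : t₀ ∈ Bad := ht₀S.1
    have ht₀I : t₀ ∈ Ioo c d := ht₀B.1
    have hut₀ : u t₀ = u t := ht₀S.2
    have habs : |t - t₀| ≤ 4 * ε := by
      by_contra hcon
      push_neg at hcon
      rcases le_or_gt t t₀ with hle | hlt
      · have hgap : 4 * ε < t₀ - t := by
          rw [abs_of_nonpos (by linarith)] at hcon; linarith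
        have := hF3 t ht t₀ ht₀I (by linarith)
        omega
      · have hgap : 4 * ε < t - t₀ := by
          rw [abs_of_pos (by linarith)] at hcon; linarith
        have := hF3 t₀ ht₀B t htI (by linarith)
        omega
    rw [hE]
    have hmem : t ∈ F (u t) := by
      rw [hF]
      simp only [dif_pos hne]
      rcases abs_le.mp habs with ⟨hl, hr⟩
      constructor <;> linarith
    exact Set.mem_biUnion (Finset.mem_range.mpr (Nat.lt_succ_of_le (huN t))) hmem
  -- measure bound
  have hvol : volume E ≤ ENNReal.ofReal (16 * N * ε) := by
    rcases Nat.eq_zero_or_pos N with hN | hN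
    · have hBadempty : Bad = ∅ := by
        ext t
        simp only [hBad, Set.mem_setOf_eq, Set.mem_empty_iff_false, iff_false, not_and]
        intro htI hne
        have h1 : u t = 0 := by have := huN t; omega
        have h2 : w t = 0 := by
          rw [hwe t htI]
          have := cnt_le (M t) (hH t htI) (-ε)
          omega
        exact hne (by rw [h1, h2])
      have hEempty : E = ∅ := by
        rw [hE]
        apply Set.eq_empty_iff_forall_notMem.mpr
        intro x hx
        simp only [Set.mem_iUnion] at hx
        obtain ⟨k, _, hxk⟩ := hx
        rw [hF] at hxk
        by_cases h : (S k).Nonempty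
        · obtain ⟨y, hy⟩ := h
          have hyB : y ∈ Bad := hy.1
          rw [hBadempty] at hyB
          exact hyB
        · simp only [dif_neg h] at hxk
          exact hxk
      rw [hEempty]
      simp
    · calc volume E ≤ ∑ k ∈ Finset.range (N + 1), volume (F k) :=
            measure_biUnion_finset_le _ _
        _ ≤ ∑ k ∈ Finset.range (N + 1), ENNReal.ofReal (8 * ε) :=
            Finset.sum_le_sum fun k _ => hFvol k
        _ = (N + 1 : ℕ) * ENNReal.ofReal (8 * ε) := by
            rw [Finset.sum_const, Finset.card_range, nsmul_eq_mul]
        _ ≤ ENNReal.ofReal (16 * N * ε) := by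
            rw [← ENNReal.ofReal_natCast (N + 1), ← ENNReal.ofReal_mul (by positivity)]
            apply ENNReal.ofReal_le_ofReal
            push_cast
            have h1N : (1 : ℝ) ≤ N := by exact_mod_cast hN
            nlinarith
  refine ⟨E, hmeas, hvol, ?_⟩
  -- good points
  intro t ht
  obtain ⟨htI, htE⟩ := ht
  have htB : t ∉ Bad := fun h => htE (hBadE h)
  have heq : u t = w t := by
    by_contra hne
    exact htB ⟨htI, hne⟩
  have heig : ∀ i, ε ≤ |(hH t htI).eigenvalues i| := by
    intro i
    by_contra hcon
    push_neg at hcon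
    rcases abs_lt.mp hcon with ⟨hl, hr⟩
    rw [hue t htI, hwe t htI] at heq
    unfold cnt at heq
    have hsub : (Finset.univ.filter fun i => (hH t htI).eigenvalues i < -ε) ⊆
        (Finset.univ.filter fun i => (hH t htI).eigenvalues i < ε) := by
      intro x hx
      simp only [Finset.mem_filter, Finset.mem_univ, true_and] at hx ⊢
      linarith
    have hseteq := Finset.eq_of_subset_of_card_le hsub (le_of_eq heq)
    have hi : i ∈ (Finset.univ.filter fun i => (hH t htI).eigenvalues i < ε) := by
      simp only [Finset.mem_filter, Finset.mem_univ, true_and]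
      exact hr
    rw [← hseteq] at hi
    simp only [Finset.mem_filter, Finset.mem_univ, true_and] at hi
    linarith
  exact good_t (M t) (hH t htI) hε heig
end

section
/- Fix γ = (γ₁,γ₂) with γ₁ ≥ 0, γ₂ ≥ 0 and ϰ with 0 ≤ ϰ ≤ γ₂. For a matrix A : Λ×Λ → gl(2,ℂ) indexed by a subset Λ ⊆ ℤ^d, define |A|_{γ,ϰ} = max( sup_a Σ_b ‖A_a^b‖ e_{γ,ϰ}(a,b), sup_b Σ_a ‖A_a^b‖ e_{γ,ϰ}(a,b) ), where e_{γ,ϰ}(a,b) = C e^{γ₁[a−b]} max([a−b],1)^{γ₂} min(⟨a⟩,⟨b⟩)^{ϰ} and [a−b] = min(|a−b|,|a+b|). Then for a suitable choice of the constant C (depending only on γ, ϰ, d), the norm is submultiplicative in the mixed sense: |BA|_{γ,ϰ} ≤ |A|_{γ,0} |B|_{γ,ϰ}, where (BA)_a^b = Σ_c B_a^c A_c^b. -/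
open scoped ENNReal Matrix.Norms.L2Operator

/-- Euclidean norm of an integer vector. -/
noncomputable def znorm {d : ℕ} (a : Fin d → ℤ) : ℝ :=
  Real.sqrt (∑ i, ((a i : ℝ)) ^ 2)

/-- `⟨a⟩ = max(|a|,1)`. -/
noncomputable def jap {d : ℕ} (a : Fin d → ℤ) : ℝ := max (znorm a) 1

/-- The pseudo-metric `[a-b] = min(|a-b|, |a+b|)`. -/
noncomputable def brk {d : ℕ} (a b : Fin d → ℤ) : ℝ :=
  min (znorm (a - b)) (znorm (a + b))

/-- The weight `e_{γ,ϰ}(a,b) = C e^{γ₁[a-b]} max([a-b],1)^{γ₂} min(⟨a⟩,⟨b⟩)^ϰ`. -/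
noncomputable def wt {d : ℕ} (C γ₁ γ₂ ϰ : ℝ) (a b : Fin d → ℤ) : ℝ :=
  C * Real.exp (γ₁ * brk a b) * (max (brk a b) 1) ^ γ₂ * (min (jap a) (jap b)) ^ ϰ

/-- The weighted mixed `ℓ¹`-`ℓ^∞` matrix norm `|A|_{γ,ϰ}`, valued in `ℝ≥0∞`. -/
noncomputable def mnorm {d : ℕ} (C γ₁ γ₂ ϰ : ℝ) (Λ : Set (Fin d → ℤ))
    (A : Λ → Λ → Matrix (Fin 2) (Fin 2) ℂ) : ℝ≥0∞ :=
  max (⨆ a : Λ, ∑' b : Λ, (‖A a b‖₊ : ℝ≥0∞) * ENNReal.ofReal (wt C γ₁ γ₂ ϰ a.1 b.1))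
      (⨆ b : Λ, ∑' a : Λ, (‖A a b‖₊ : ℝ≥0∞) * ENNReal.ofReal (wt C γ₁ γ₂ ϰ a.1 b.1))

namespace MnormAux

/-- The integer vector as an element of Euclidean space. -/
noncomputable def zv {d : ℕ} (a : Fin d → ℤ) : EuclideanSpace ℝ (Fin d) :=
  WithLp.toLp 2 (fun i => (a i : ℝ))

lemma zv_add {d : ℕ} (a b : Fin d → ℤ) : zv (a + b) = zv a + zv b := by
  ext i; simp [zv]

lemma zv_sub {d : ℕ} (a b : Fin d → ℤ) : zv (a - b) = zv a - zv b := by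
  ext i; simp [zv]

lemma znorm_eq {d : ℕ} (a : Fin d → ℤ) : znorm a = ‖zv a‖ := by
  rw [EuclideanSpace.norm_eq]
  simp [znorm, zv, Real.norm_eq_abs, sq_abs]

lemma znorm_nonneg {d : ℕ} (a : Fin d → ℤ) : 0 ≤ znorm a := Real.sqrt_nonneg _

lemma brk_nonneg {d : ℕ} (a b : Fin d → ℤ) : 0 ≤ brk a b :=
  le_min (znorm_nonneg _) (znorm_nonneg _)

lemma brk_eq {d : ℕ} (a b : Fin d → ℤ) : brk a b = min ‖zv a - zv b‖ ‖zv a + zv b‖ := by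
  rw [brk, znorm_eq, znorm_eq, zv_add, zv_sub]

lemma brk_comm {d : ℕ} (a b : Fin d → ℤ) : brk a b = brk b a := by
  rw [brk_eq, brk_eq]
  rw [show zv b - zv a = -(zv a - zv b) by abel, norm_neg, add_comm]

lemma brk_triangle {d : ℕ} (a c b : Fin d → ℤ) : brk a b ≤ brk a c + brk c b := by
  rw [brk_eq, brk_eq, brk_eq]
  set x := zv a; set z := zv c; set y := zv b
  rcases min_cases ‖x - z‖ ‖x + z‖ with ⟨h1, _⟩ | ⟨h1, _⟩ <;>
    rcases min_cases ‖z - y‖ ‖z + y‖ with ⟨h2, _⟩ | ⟨h2, _⟩ <;> rw [h1, h2]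
  · exact le_trans (min_le_left _ _)
      (by rw [show x - y = (x - z) + (z - y) by abel]; exact norm_add_le _ _)
  · exact le_trans (min_le_right _ _)
      (by rw [show x + y = (x - z) + (z + y) by abel]; exact norm_add_le _ _)
  · exact le_trans (min_le_right _ _)
      (by rw [show x + y = (x + z) - (z - y) by abel]; exact norm_sub_le _ _)
  · exact le_trans (min_le_left _ _)
      (by rw [show x - y = (x + z) - (z + y) by abel]; exact norm_sub_le _ _)

lemma one_le_jap {d : ℕ} (a : Fin d → ℤ) : 1 ≤ jap a := le_max_right _ _

lemma jap_le {d : ℕ} (a c : Fin d → ℤ) : jap a ≤ jap c + brk a c := by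
  have hb := brk_nonneg a c
  apply max_le _ (le_add_of_le_of_nonneg (one_le_jap c) hb)
  have : znorm a ≤ znorm c + brk a c := by
    rw [znorm_eq, znorm_eq, brk_eq]
    rcases min_cases ‖zv a - zv c‖ ‖zv a + zv c‖ with ⟨h1, _⟩ | ⟨h1, _⟩ <;> rw [h1]
    · have h := norm_add_le (zv c) (zv a - zv c)
      rw [show zv c + (zv a - zv c) = zv a by abel] at h
      exact h
    · have h := norm_add_le (-zv c) (zv a + zv c)
      rw [show -zv c + (zv a + zv c) = zv a by abel, norm_neg] at h
      exact h
  exact this.trans (by gcongr; exact le_max_left _ _)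

lemma one_le_bk {d : ℕ} (a b : Fin d → ℤ) : 1 ≤ max (brk a b) 1 := le_max_right _ _

lemma bk_le {d : ℕ} (a c b : Fin d → ℤ) :
    max (brk a b) 1 ≤ 2 * max (brk a c) 1 * max (brk c b) 1 := by
  have h := brk_triangle a c b
  have h1 : brk a c ≤ max (brk a c) 1 := le_max_left _ _
  have h2 : brk c b ≤ max (brk c b) 1 := le_max_left _ _
  have p1 := one_le_bk a c; have p2 := one_le_bk c b
  apply max_le <;> nlinarith

lemma jap_le_mul {d : ℕ} (a c : Fin d → ℤ) :
    jap a ≤ 2 * jap c * max (brk a c) 1 := by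
  have h := jap_le a c
  have h1 : brk a c ≤ max (brk a c) 1 := le_max_left _ _
  have p1 := one_le_jap c; have p2 := one_le_bk a c
  nlinarith

/-- The key pointwise submultiplicativity of the weight. -/
lemma wt_key {d : ℕ} (γ₁ γ₂ ϰ : ℝ) (hγ₁ : 0 ≤ γ₁) (hϰ : 0 ≤ ϰ) (hϰγ : ϰ ≤ γ₂)
    (a c b : Fin d → ℤ) :
    wt ((2:ℝ) ^ (γ₂ + ϰ)) γ₁ γ₂ ϰ a b ≤
      wt ((2:ℝ) ^ (γ₂ + ϰ)) γ₁ γ₂ ϰ a c * wt ((2:ℝ) ^ (γ₂ + ϰ)) γ₁ γ₂ 0 c b := by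
  have hγ₂ : 0 ≤ γ₂ := hϰ.trans hϰγ
  set C : ℝ := (2:ℝ) ^ (γ₂ + ϰ) with hC
  have hCpos : 0 < C := Real.rpow_pos_of_pos two_pos _
  set X : ℝ := max (brk a b) 1
  set Y : ℝ := max (brk a c) 1
  set Z : ℝ := max (brk c b) 1
  have hX : 1 ≤ X := le_max_right _ _
  have hY : 1 ≤ Y := le_max_right _ _
  have hZ : 1 ≤ Z := le_max_right _ _
  set m : ℝ := min (jap a) (jap b)
  set m₁ : ℝ := min (jap a) (jap c)
  have hm : 1 ≤ m := le_min (one_le_jap a) (one_le_jap b)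
  have hm₁ : 1 ≤ m₁ := le_min (one_le_jap a) (one_le_jap c)
  -- exponential part
  have hexp : Real.exp (γ₁ * brk a b) ≤
      Real.exp (γ₁ * brk a c) * Real.exp (γ₁ * brk c b) := by
    rw [← Real.exp_add]
    apply Real.exp_le_exp.2
    rw [← mul_add]
    exact mul_le_mul_of_nonneg_left (brk_triangle a c b) hγ₁
  -- polynomial part
  have hpoly : X ^ γ₂ * m ^ ϰ ≤ C * (Y ^ γ₂ * m₁ ^ ϰ * Z ^ γ₂) := by
    rcases le_or_gt m (jap c) with hcase | hcase
    · -- m ≤ ⟨c⟩, hence m ≤ m₁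
      have hmm : m ≤ m₁ := le_min (min_le_left _ _) hcase
      have h1 : m ^ ϰ ≤ m₁ ^ ϰ :=
        Real.rpow_le_rpow (by linarith) hmm hϰ
      have h2 : X ^ γ₂ ≤ (2 * Y * Z) ^ γ₂ :=
        Real.rpow_le_rpow (by linarith) (bk_le a c b) hγ₂
      have h3 : (2 * Y * Z) ^ γ₂ = 2 ^ γ₂ * Y ^ γ₂ * Z ^ γ₂ := by
        rw [Real.mul_rpow (by positivity) (by linarith),
          Real.mul_rpow (by norm_num) (by linarith)]
      have h4 : (2:ℝ) ^ γ₂ ≤ C :=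
        Real.rpow_le_rpow_of_exponent_le one_le_two (by linarith)
      calc X ^ γ₂ * m ^ ϰ ≤ (2 ^ γ₂ * Y ^ γ₂ * Z ^ γ₂) * m₁ ^ ϰ := by
            apply mul_le_mul (h2.trans_eq h3) h1 (by positivity)
            positivity
        _ ≤ (C * Y ^ γ₂ * Z ^ γ₂) * m₁ ^ ϰ := by gcongr
        _ = C * (Y ^ γ₂ * m₁ ^ ϰ * Z ^ γ₂) := by ring
    · -- ⟨c⟩ < m, so m₁ = ⟨c⟩
      have hac : jap c < jap a := lt_of_lt_of_le hcase (min_le_left _ _)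
      have hm₁c : m₁ = jap c := min_eq_right hac.le
      have hmY : m ≤ 2 * jap c * Y := (min_le_left _ _).trans (jap_le_mul a c)
      have hmZ : m ≤ 2 * jap c * Z := by
        refine (min_le_right _ _).trans ?_
        have := jap_le_mul b c
        rwa [brk_comm b c] at this
      have hjc : 1 ≤ jap c := one_le_jap c
      -- m ≤ 2 ⟨c⟩ min(Y,Z), X ≤ 2 max(Y,Z)
      have hμ : 1 ≤ min Y Z := le_min hY hZ
      have hM : 1 ≤ max Y Z := hY.trans (le_max_left _ _)
      have hmμ : m ≤ 2 * jap c * min Y Z := by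
        rcases le_total Y Z with h | h
        · rw [min_eq_left h]; exact hmY
        · rw [min_eq_right h]; exact hmZ
      have hXM : X ≤ 2 * max Y Z := by
        apply max_le
        · have := brk_triangle a c b
          have h1 : brk a c ≤ max Y Z := (le_max_left _ (1:ℝ)).trans (le_max_left _ _)
          have h2 : brk c b ≤ max Y Z := (le_max_left _ (1:ℝ)).trans (le_max_right _ _)
          linarith
        · linarith
      have key : X ^ γ₂ * m ^ ϰ ≤ (2 * max Y Z) ^ γ₂ * (2 * jap c * min Y Z) ^ ϰ := by
        apply mul_le_mul (Real.rpow_le_rpow (by linarith) hXM hγ₂)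
          (Real.rpow_le_rpow (by linarith) hmμ hϰ) (by positivity) (by positivity)
      have expand : (2 * max Y Z) ^ γ₂ * (2 * jap c * min Y Z) ^ ϰ =
          (2 ^ γ₂ * 2 ^ ϰ) * ((max Y Z) ^ γ₂ * (min Y Z) ^ ϰ) * (jap c) ^ ϰ := by
        rw [Real.mul_rpow (by norm_num) (by linarith),
          Real.mul_rpow (by positivity) (by linarith),
          Real.mul_rpow (by norm_num) (by linarith)]
        ring
      have hμϰ : (min Y Z) ^ ϰ ≤ (min Y Z) ^ γ₂ := Real.rpow_le_rpow_of_exponent_le hμ hϰγ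
      have hMμ : (max Y Z) ^ γ₂ * (min Y Z) ^ γ₂ = Y ^ γ₂ * Z ^ γ₂ := by
        rw [← Real.mul_rpow (by linarith) (by linarith),
          ← Real.mul_rpow (by linarith) (by linarith)]
        congr 1
        rcases le_total Y Z with h | h
        · rw [max_eq_right h, min_eq_left h]; ring
        · rw [max_eq_left h, min_eq_right h]
      have hCeq : C = 2 ^ γ₂ * 2 ^ ϰ := by
        rw [hC, Real.rpow_add two_pos]
      calc X ^ γ₂ * m ^ ϰ
          ≤ (2 ^ γ₂ * 2 ^ ϰ) * ((max Y Z) ^ γ₂ * (min Y Z) ^ ϰ) * (jap c) ^ ϰ := by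
            rw [← expand]; exact key
        _ ≤ (2 ^ γ₂ * 2 ^ ϰ) * ((max Y Z) ^ γ₂ * (min Y Z) ^ γ₂) * (jap c) ^ ϰ := by
            gcongr
        _ = C * (Y ^ γ₂ * (jap c) ^ ϰ * Z ^ γ₂) := by rw [hCeq, hMμ]; ring
        _ = C * (Y ^ γ₂ * m₁ ^ ϰ * Z ^ γ₂) := by rw [hm₁c]
  -- assemble
  have hz : (min (jap c) (jap b)) ^ (0:ℝ) = 1 := by
    apply Real.rpow_zero
  rw [wt, wt, wt, hz]
  have e1 : 0 < Real.exp (γ₁ * brk a b) := Real.exp_pos _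
  have e2 : 0 < Real.exp (γ₁ * brk a c) := Real.exp_pos _
  have e3 : 0 < Real.exp (γ₁ * brk c b) := Real.exp_pos _
  calc C * Real.exp (γ₁ * brk a b) * X ^ γ₂ * m ^ ϰ
      ≤ C * (Real.exp (γ₁ * brk a c) * Real.exp (γ₁ * brk c b)) * (X ^ γ₂ * m ^ ϰ) := by
        rw [mul_assoc (C * Real.exp (γ₁ * brk a b))]
        apply mul_le_mul_of_nonneg_right _ (by positivity)
        exact mul_le_mul_of_nonneg_left hexp hCpos.le
    _ ≤ C * (Real.exp (γ₁ * brk a c) * Real.exp (γ₁ * brk c b)) *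
          (C * (Y ^ γ₂ * m₁ ^ ϰ * Z ^ γ₂)) := by
        apply mul_le_mul_of_nonneg_left hpoly (by positivity)
    _ = C * Real.exp (γ₁ * brk a c) * Y ^ γ₂ * m₁ ^ ϰ *
          (C * Real.exp (γ₁ * brk c b) * Z ^ γ₂ * 1) := by ring

lemma wt_nonneg {d : ℕ} (C γ₁ γ₂ ϰ : ℝ) (hC : 0 ≤ C) (a b : Fin d → ℤ) :
    0 ≤ wt C γ₁ γ₂ ϰ a b := by
  have h1 : (0:ℝ) < max (brk a b) 1 := lt_of_lt_of_le one_pos (le_max_right _ _)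
  have h2 : (0:ℝ) < min (jap a) (jap b) :=
    lt_of_lt_of_le one_pos (le_min (one_le_jap a) (one_le_jap b))
  rw [wt]
  positivity

lemma enorm_tsum_le {ι E : Type*} [NormedAddCommGroup E] [CompleteSpace E] (f : ι → E) :
    (‖∑' i, f i‖₊ : ℝ≥0∞) ≤ ∑' i, (‖f i‖₊ : ℝ≥0∞) := by
  by_cases h : Summable fun i => ‖f i‖₊
  · rw [← ENNReal.coe_tsum h]
    exact_mod_cast nnnorm_tsum_le h
  · have : ∑' i, (‖f i‖₊ : ℝ≥0∞) = ⊤ := by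
      by_contra h'
      exact h (ENNReal.tsum_coe_ne_top_iff_summable.mp h')
    simp [this]

end MnormAux

/-- Mixed submultiplicativity of the weighted matrix norm:
`|BA|_{γ,ϰ} ≤ |A|_{γ,0} |B|_{γ,ϰ}` for a suitable constant `C` in the weight. -/
theorem mnorm_mul_le (d : ℕ) (γ₁ γ₂ ϰ : ℝ) (hγ₁ : 0 ≤ γ₁) (hϰ : 0 ≤ ϰ)
    (hϰγ : ϰ ≤ γ₂) :
    ∃ C : ℝ, 0 < C ∧ ∀ (Λ : Set (Fin d → ℤ))
      (A B : Λ → Λ → Matrix (Fin 2) (Fin 2) ℂ),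
      mnorm C γ₁ γ₂ ϰ Λ (fun a b => ∑' c : Λ, B a c * A c b) ≤
        mnorm C γ₁ γ₂ 0 Λ A * mnorm C γ₁ γ₂ ϰ Λ B := by
  classical
  refine ⟨(2:ℝ) ^ (γ₂ + ϰ), Real.rpow_pos_of_pos two_pos _, fun Λ A B => ?_⟩
  set C : ℝ := (2:ℝ) ^ (γ₂ + ϰ) with hC
  have hCpos : 0 < C := Real.rpow_pos_of_pos two_pos _
  set NA : ℝ≥0∞ := mnorm C γ₁ γ₂ 0 Λ A with hNA
  set NB : ℝ≥0∞ := mnorm C γ₁ γ₂ ϰ Λ B with hNB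
  -- weight in ℝ≥0∞
  set wk : Λ → Λ → ℝ≥0∞ := fun x y => ENNReal.ofReal (wt C γ₁ γ₂ ϰ x.1 y.1) with hwk
  set w0 : Λ → Λ → ℝ≥0∞ := fun x y => ENNReal.ofReal (wt C γ₁ γ₂ 0 x.1 y.1) with hw0
  have hkey : ∀ a c b : Λ, wk a b ≤ wk a c * w0 c b := by
    intro a c b
    rw [hwk, hw0]
    dsimp only
    rw [← ENNReal.ofReal_mul (MnormAux.wt_nonneg _ _ _ _ hCpos.le _ _)]
    exact ENNReal.ofReal_le_ofReal (MnormAux.wt_key γ₁ γ₂ ϰ hγ₁ hϰ hϰγ a.1 c.1 b.1)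
  -- row/column bounds from the definition of mnorm
  have hArow : ∀ c : Λ, ∑' b : Λ, (‖A c b‖₊ : ℝ≥0∞) * w0 c b ≤ NA :=
    fun c => le_trans (le_iSup (fun c : Λ => ∑' b : Λ,
      (‖A c b‖₊ : ℝ≥0∞) * w0 c b) c) (le_max_left _ _)
  have hAcol : ∀ b : Λ, ∑' c : Λ, (‖A c b‖₊ : ℝ≥0∞) * w0 c b ≤ NA :=
    fun b => le_trans (le_iSup (fun b : Λ => ∑' c : Λ,
      (‖A c b‖₊ : ℝ≥0∞) * w0 c b) b) (le_max_right _ _)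
  have hBrow : ∀ a : Λ, ∑' c : Λ, (‖B a c‖₊ : ℝ≥0∞) * wk a c ≤ NB :=
    fun a => le_trans (le_iSup (fun a : Λ => ∑' c : Λ,
      (‖B a c‖₊ : ℝ≥0∞) * wk a c) a) (le_max_left _ _)
  have hBcol : ∀ c : Λ, ∑' a : Λ, (‖B a c‖₊ : ℝ≥0∞) * wk a c ≤ NB :=
    fun c => le_trans (le_iSup (fun c : Λ => ∑' a : Λ,
      (‖B a c‖₊ : ℝ≥0∞) * wk a c) c) (le_max_right _ _)
  -- entrywise bound on the product
  have hent : ∀ a b : Λ, (‖∑' c : Λ, B a c * A c b‖₊ : ℝ≥0∞) ≤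
      ∑' c : Λ, (‖B a c‖₊ : ℝ≥0∞) * (‖A c b‖₊ : ℝ≥0∞) := by
    intro a b
    refine le_trans (MnormAux.enorm_tsum_le _) (ENNReal.tsum_le_tsum fun c => ?_)
    exact_mod_cast nnnorm_mul_le (B a c) (A c b)
  -- the double-sum bound
  have hdouble : ∀ a b : Λ, (‖∑' c : Λ, B a c * A c b‖₊ : ℝ≥0∞) * wk a b ≤
      ∑' c : Λ, ((‖B a c‖₊ : ℝ≥0∞) * wk a c) * ((‖A c b‖₊ : ℝ≥0∞) * w0 c b) := by
    intro a b
    calc (‖∑' c : Λ, B a c * A c b‖₊ : ℝ≥0∞) * wk a b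
        ≤ (∑' c : Λ, (‖B a c‖₊ : ℝ≥0∞) * (‖A c b‖₊ : ℝ≥0∞)) * wk a b :=
          mul_le_mul_left (hent a b) _
      _ = ∑' c : Λ, (‖B a c‖₊ : ℝ≥0∞) * (‖A c b‖₊ : ℝ≥0∞) * wk a b :=
          ENNReal.tsum_mul_right.symm
      _ ≤ ∑' c : Λ, ((‖B a c‖₊ : ℝ≥0∞) * wk a c) * ((‖A c b‖₊ : ℝ≥0∞) * w0 c b) := by
          refine ENNReal.tsum_le_tsum fun c => ?_
          calc (‖B a c‖₊ : ℝ≥0∞) * (‖A c b‖₊ : ℝ≥0∞) * wk a b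
              ≤ (‖B a c‖₊ : ℝ≥0∞) * (‖A c b‖₊ : ℝ≥0∞) * (wk a c * w0 c b) :=
                mul_le_mul_right (hkey a c b) _
            _ = ((‖B a c‖₊ : ℝ≥0∞) * wk a c) * ((‖A c b‖₊ : ℝ≥0∞) * w0 c b) := by ring
  -- row estimate
  have hrow : ∀ a : Λ, ∑' b : Λ, (‖∑' c : Λ, B a c * A c b‖₊ : ℝ≥0∞) * wk a b ≤ NA * NB := by
    intro a
    calc ∑' b : Λ, (‖∑' c : Λ, B a c * A c b‖₊ : ℝ≥0∞) * wk a b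
        ≤ ∑' b : Λ, ∑' c : Λ, ((‖B a c‖₊ : ℝ≥0∞) * wk a c) * ((‖A c b‖₊ : ℝ≥0∞) * w0 c b) :=
          ENNReal.tsum_le_tsum fun b => hdouble a b
      _ = ∑' c : Λ, ∑' b : Λ, ((‖B a c‖₊ : ℝ≥0∞) * wk a c) * ((‖A c b‖₊ : ℝ≥0∞) * w0 c b) :=
          ENNReal.tsum_comm
      _ = ∑' c : Λ, ((‖B a c‖₊ : ℝ≥0∞) * wk a c) * ∑' b : Λ, ((‖A c b‖₊ : ℝ≥0∞) * w0 c b) := by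
          refine tsum_congr fun c => ?_
          exact ENNReal.tsum_mul_left
      _ ≤ ∑' c : Λ, ((‖B a c‖₊ : ℝ≥0∞) * wk a c) * NA :=
          ENNReal.tsum_le_tsum fun c => mul_le_mul_right (hArow c) _
      _ = (∑' c : Λ, (‖B a c‖₊ : ℝ≥0∞) * wk a c) * NA := ENNReal.tsum_mul_right
      _ ≤ NB * NA := mul_le_mul_left (hBrow a) _
      _ = NA * NB := mul_comm _ _
  -- column estimate
  have hcol : ∀ b : Λ, ∑' a : Λ, (‖∑' c : Λ, B a c * A c b‖₊ : ℝ≥0∞) * wk a b ≤ NA * NB := by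
    intro b
    calc ∑' a : Λ, (‖∑' c : Λ, B a c * A c b‖₊ : ℝ≥0∞) * wk a b
        ≤ ∑' a : Λ, ∑' c : Λ, ((‖B a c‖₊ : ℝ≥0∞) * wk a c) * ((‖A c b‖₊ : ℝ≥0∞) * w0 c b) :=
          ENNReal.tsum_le_tsum fun a => hdouble a b
      _ = ∑' c : Λ, ∑' a : Λ, ((‖B a c‖₊ : ℝ≥0∞) * wk a c) * ((‖A c b‖₊ : ℝ≥0∞) * w0 c b) :=
          ENNReal.tsum_comm
      _ = ∑' c : Λ, (∑' a : Λ, (‖B a c‖₊ : ℝ≥0∞) * wk a c) * ((‖A c b‖₊ : ℝ≥0∞) * w0 c b) := by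
          refine tsum_congr fun c => ?_
          exact ENNReal.tsum_mul_right
      _ ≤ ∑' c : Λ, NB * ((‖A c b‖₊ : ℝ≥0∞) * w0 c b) :=
          ENNReal.tsum_le_tsum fun c => mul_le_mul_left (hBcol c) _
      _ = NB * ∑' c : Λ, (‖A c b‖₊ : ℝ≥0∞) * w0 c b := ENNReal.tsum_mul_left
      _ ≤ NB * NA := mul_le_mul_right (hAcol b) _
      _ = NA * NB := mul_comm _ _
  rw [mnorm]
  exact max_le (iSup_le hrow) (iSup_le hcol)
end
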